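/- Let S be a ring, R a maximal subring of S, and I a nonzero two-sided ideal of S with R ∩ I = {0}. Then the following are equivalent: (1) there is an R-isomorphism from I onto the quotient ring R/ann_R(I) (where R acts on R/ann_R(I) by left and right multiplication through the quotient map); (2) the nonunital ring I has a multiplicative identity element; (3) I contains a nonzero idempotent e with ex = xe for all x ∈ I; (4) there is a nonzero R-homomorphism R → I; (5) there is a nonzero R-homomorphism I → R/ann_R(I) and ann_R(I) is a maximal two-sided ideal of R; (6) S is a central extension of R and I·I ≠ 0. -/

import Mathlib

/-- `R` is a maximal subring of `S`. -/
def IsMaximalSubring {S : Type*} [Ring S] (R : Subring S) : Prop :=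
  R ≠ ⊤ ∧ ∀ T : Subring S, R ≤ T → T = R ∨ T = ⊤

/-- `S` is a central extension of its subring `R`: `S` is generated as a left
`R`-module by the centralizer `C_S(R)`. -/
def IsCentralExtension {S : Type*} [Ring S] (R : Subring S) : Prop :=
  AddSubgroup.closure
    {s : S | ∃ r ∈ R, ∃ c : S, (∀ x ∈ R, c * x = x * c) ∧ s = r * c} = ⊤

namespace Stmt15Aux

variable {S : Type*} [Ring S]

/-- `R + K` as a subring of `S`, for a two-sided ideal `K`. -/
def rplus (R : Subring S) (K : TwoSidedIdeal S) : Subring S where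
  carrier := {s | ∃ r ∈ R, ∃ k ∈ K, s = r + k}
  zero_mem' := ⟨0, R.zero_mem, 0, K.zero_mem, (add_zero 0).symm⟩
  one_mem' := ⟨1, R.one_mem, 0, K.zero_mem, (add_zero 1).symm⟩
  add_mem' := by
    rintro a b ⟨r, hr, k, hk, rfl⟩ ⟨r', hr', k', hk', rfl⟩
    exact ⟨r + r', R.add_mem hr hr', k + k', K.add_mem hk hk', by abel⟩
  neg_mem' := by
    rintro a ⟨r, hr, k, hk, rfl⟩
    exact ⟨-r, R.neg_mem hr, -k, K.neg_mem hk, by abel⟩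
  mul_mem' := by
    rintro a b ⟨r, hr, k, hk, rfl⟩ ⟨r', hr', k', hk', rfl⟩
    refine ⟨r * r', R.mul_mem hr hr', r * k' + k * r' + k * k',
      K.add_mem (K.add_mem (K.mul_mem_left _ _ hk') (K.mul_mem_right _ _ hk))
        (K.mul_mem_right _ _ hk), by noncomm_ring⟩

lemma mem_rplus {R : Subring S} {K : TwoSidedIdeal S} {s : S} :
    s ∈ rplus R K ↔ ∃ r ∈ R, ∃ k ∈ K, s = r + k := Iff.rfl

variable (R : Subring S) (I : TwoSidedIdeal S)

lemma exists_ne_zero (hI : I ≠ ⊥) : ∃ x, x ∈ I ∧ x ≠ 0 := by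
  by_contra h
  push_neg at h
  exact hI (TwoSidedIdeal.ext fun x => by
    rw [TwoSidedIdeal.mem_bot]
    exact ⟨fun hx => h x hx, fun hx => hx ▸ I.zero_mem⟩)

lemma split (hmax : IsMaximalSubring R) (hI : I ≠ ⊥)
    (hRI : ∀ x : S, x ∈ R → x ∈ I → x = 0) :
    ∀ s : S, ∃ r ∈ R, ∃ i ∈ I, s = r + i := by
  have hle : R ≤ rplus R I := fun r hr => ⟨r, hr, 0, I.zero_mem, (add_zero r).symm⟩
  rcases hmax.2 (rplus R I) hle with h | h
  · obtain ⟨x, hx, hx0⟩ := exists_ne_zero I hI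
    have hm : x ∈ rplus R I := ⟨0, R.zero_mem, x, hx, (zero_add x).symm⟩
    rw [h] at hm
    exact absurd (hRI x hm hx) hx0
  · intro s
    have hm : s ∈ rplus R I := by rw [h]; exact Subring.mem_top s
    exact hm

/-- Dichotomy: a two-sided ideal of `S` contained in `I` is either zero or all of `I`. -/
lemma dichotomy (hmax : IsMaximalSubring R) (hRI : ∀ x : S, x ∈ R → x ∈ I → x = 0)
    (K : TwoSidedIdeal S) (hKI : ∀ x ∈ K, x ∈ I) :
    (∀ x ∈ K, x = 0) ∨ (∀ x ∈ I, x ∈ K) := by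
  have hle : R ≤ rplus R K := fun r hr => ⟨r, hr, 0, K.zero_mem, (add_zero r).symm⟩
  rcases hmax.2 (rplus R K) hle with h | h
  · left
    intro x hx
    have hm : x ∈ rplus R K := ⟨0, R.zero_mem, x, hx, (zero_add x).symm⟩
    rw [h] at hm
    exact hRI x hm (hKI x hx)
  · right
    intro x hxI
    have hm : x ∈ rplus R K := by rw [h]; exact Subring.mem_top x
    obtain ⟨r, hr, k, hk, hx⟩ := hm
    have hrI : r ∈ I := by
      have hr' : r = x - k := by rw [hx]; abel
      rw [hr']
      exact I.sub_mem hxI (hKI k hk)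
    have hr0 : r = 0 := hRI r hr hrI
    have hxk : x = k := by rw [hx, hr0, zero_add]
    rw [hxk]
    exact hk

lemma central_of_identity {e : S} (heI : e ∈ I)
    (hid : ∀ x ∈ I, e * x = x ∧ x * e = x) : ∀ s : S, e * s = s * e := fun s =>
  calc e * s = (e * s) * e := ((hid _ (I.mul_mem_right _ _ heI)).2).symm
    _ = e * (s * e) := by rw [mul_assoc]
    _ = s * e := (hid _ (I.mul_mem_left _ _ heI)).1

/-- If `I` has an identity `e`, then `I = R·e`. -/
lemma eq_re (hmax : IsMaximalSubring R) (hRI : ∀ x : S, x ∈ R → x ∈ I → x = 0)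
    {e : S} (heI : e ∈ I) (he0 : e ≠ 0) (hid : ∀ x ∈ I, e * x = x ∧ x * e = x) :
    ∀ x ∈ I, ∃ r ∈ R, x = r * e := by
  have hc := central_of_identity I heI hid
  have hee : e * e = e := (hid e heI).1
  let T : Subring S :=
  { carrier := {s | ∃ r ∈ R, ∃ r' ∈ R, s = r + r' * e}
    zero_mem' := ⟨0, R.zero_mem, 0, R.zero_mem, by simp⟩
    one_mem' := ⟨1, R.one_mem, 0, R.zero_mem, by simp⟩
    add_mem' := by
      rintro a b ⟨r, hr, r', hr', rfl⟩ ⟨u, hu, u', hu', rfl⟩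
      exact ⟨r + u, R.add_mem hr hu, r' + u', R.add_mem hr' hu', by noncomm_ring⟩
    neg_mem' := by
      rintro a ⟨r, hr, r', hr', rfl⟩
      exact ⟨-r, R.neg_mem hr, -r', R.neg_mem hr', by noncomm_ring⟩
    mul_mem' := by
      rintro a b ⟨r, hr, r', hr', rfl⟩ ⟨u, hu, u', hu', rfl⟩
      refine ⟨r * u, R.mul_mem hr hu, r * u' + r' * u + r' * u',
        R.add_mem (R.add_mem (R.mul_mem hr hu') (R.mul_mem hr' hu)) (R.mul_mem hr' hu'), ?_⟩
      have key : e * (u' * e) = u' * e := by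
        rw [← mul_assoc, hc u', mul_assoc, hee]
      have h3 : e * u = u * e := hc u
      calc (r + r' * e) * (u + u' * e)
          = r * u + r * (u' * e) + r' * (e * u) + r' * (e * (u' * e)) := by noncomm_ring
        _ = r * u + r * (u' * e) + r' * (u * e) + r' * (u' * e) := by rw [h3, key]
        _ = r * u + (r * u' + r' * u + r' * u') * e := by noncomm_ring }
  have hle : R ≤ T := fun r hr => ⟨r, hr, 0, R.zero_mem, by simp⟩
  have heT : e ∈ T := ⟨0, R.zero_mem, 1, R.one_mem, by simp⟩
  rcases hmax.2 T hle with h | h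
  · rw [h] at heT
    exact absurd (hRI e heT heI) he0
  · intro x hxI
    have hm : x ∈ T := by rw [h]; exact Subring.mem_top x
    obtain ⟨r, hr, r', hr', hx⟩ := hm
    have hrI : r ∈ I := by
      have hr2 : r = x - r' * e := by rw [hx]; abel
      rw [hr2]
      exact I.sub_mem hxI (I.mul_mem_left _ _ heI)
    have hr0 : r = 0 := hRI r hr hrI
    exact ⟨r', hr', by rw [hx, hr0, zero_add]⟩


/-- Statement (1). -/
def P1 (R : Subring S) (I : TwoSidedIdeal S) (Z : TwoSidedIdeal R) : Prop :=
  ∃ f : S → Z.ringCon.Quotient,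
    (∀ i ∈ I, ∀ j ∈ I, f (i + j) = f i + f j) ∧
    (∀ r : R, ∀ i ∈ I, f ((r : S) * i) = (r : Z.ringCon.Quotient) * f i) ∧
    (∀ r : R, ∀ i ∈ I, f (i * (r : S)) = f i * (r : Z.ringCon.Quotient)) ∧
    (∀ i ∈ I, ∀ j ∈ I, f (i * j) = f i * f j) ∧
    (∀ i ∈ I, ∀ j ∈ I, f i = f j → i = j) ∧
    (∀ q : Z.ringCon.Quotient, ∃ i ∈ I, f i = q)

/-- Statement (2). -/
def P2 (I : TwoSidedIdeal S) : Prop := ∃ e ∈ I, ∀ x ∈ I, e * x = x ∧ x * e = x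

/-- Statement (3). -/
def P3 (I : TwoSidedIdeal S) : Prop := ∃ e ∈ I, e ≠ 0 ∧ e * e = e ∧ ∀ x ∈ I, e * x = x * e

/-- Statement (4). -/
def P4 (R : Subring S) (I : TwoSidedIdeal S) : Prop :=
  ∃ g : S → S,
    (∀ r ∈ R, g r ∈ I) ∧
    (∀ r ∈ R, ∀ r' ∈ R, g (r + r') = g r + g r') ∧
    (∀ r ∈ R, ∀ x ∈ R, g (r * x) = r * g x) ∧
    (∀ r ∈ R, ∀ x ∈ R, g (x * r) = g x * r) ∧
    (∀ r ∈ R, ∀ x ∈ R, g (r * x) = g r * g x) ∧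
    (∃ r ∈ R, g r ≠ 0)

/-- Statement (5). -/
def P5 (R : Subring S) (I : TwoSidedIdeal S) (Z : TwoSidedIdeal R) : Prop :=
  (∃ f : S → Z.ringCon.Quotient,
      (∀ i ∈ I, ∀ j ∈ I, f (i + j) = f i + f j) ∧
      (∀ r : R, ∀ i ∈ I, f ((r : S) * i) = (r : Z.ringCon.Quotient) * f i) ∧
      (∀ r : R, ∀ i ∈ I, f (i * (r : S)) = f i * (r : Z.ringCon.Quotient)) ∧
      (∀ i ∈ I, ∀ j ∈ I, f (i * j) = f i * f j) ∧
      (∃ i ∈ I, f i ≠ 0)) ∧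
    (Z ≠ ⊤ ∧ ∀ J : TwoSidedIdeal R, Z ≤ J → J = Z ∨ J = ⊤)

/-- Statement (6). -/
def P6 (R : Subring S) (I : TwoSidedIdeal S) : Prop := IsCentralExtension R ∧ ∃ x ∈ I, ∃ y ∈ I, x * y ≠ 0

variable {R I}

section WithIdentity

variable (Z : TwoSidedIdeal R)
  (hZ : ∀ x : R, x ∈ Z ↔ ∀ i ∈ I, (x : S) * i = 0 ∧ i * (x : S) = 0)
  {e : S} (heI : e ∈ I) (hid : ∀ x ∈ I, e * x = x ∧ x * e = x)

include hZ heI hid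

lemma mem_ann (a : R) (h : (a : S) * e = 0) : a ∈ Z := by
  have hc := central_of_identity I heI hid
  rw [hZ]
  intro i hi
  constructor
  · rw [← (hid i hi).1, ← mul_assoc, h, zero_mul]
  · rw [← (hid i hi).2, mul_assoc, hc, h, mul_zero]

lemma qeq (a b : R) :
    ((a : Z.ringCon.Quotient) = (b : Z.ringCon.Quotient)) ↔ (a : S) * e = (b : S) * e := by
  rw [RingCon.eq, TwoSidedIdeal.rel_iff]
  have hcoe : ((a - b : R) : S) = (a : S) - (b : S) := by norm_cast
  constructor
  · intro h
    have h1 := ((hZ (a - b)).1 h e heI).1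
    rw [hcoe, sub_mul] at h1
    exact sub_eq_zero.1 h1
  · intro h
    exact mem_ann Z hZ heI hid _ (by rw [hcoe, sub_mul, h, sub_self])

lemma quot_nontrivial (he0 : e ≠ 0) :
    ((1 : R) : Z.ringCon.Quotient) ≠ ((0 : R) : Z.ringCon.Quotient) := by
  rw [Ne, qeq Z hZ heI hid]
  intro h
  apply he0
  simpa using h

end WithIdentity

lemma h12 (Z : TwoSidedIdeal R) : P1 R I Z → P2 I := by
  rintro ⟨f, hfadd, hfl, hfr, hfm, hfinj, hfsurj⟩
  obtain ⟨e, heI, hfe⟩ := hfsurj 1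
  refine ⟨e, heI, fun x hx => ⟨?_, ?_⟩⟩
  · exact hfinj _ (I.mul_mem_right e x heI) x hx (by rw [hfm e heI x hx, hfe, one_mul])
  · exact hfinj _ (I.mul_mem_left x e heI) x hx (by rw [hfm x hx e heI, hfe, mul_one])

lemma h23 (hI : I ≠ ⊥) : P2 I → P3 I := by
  rintro ⟨e, heI, hid⟩
  obtain ⟨x, hxI, hx0⟩ := exists_ne_zero I hI
  have he0 : e ≠ 0 := fun h => hx0 (by rw [← (hid x hxI).1, h, zero_mul])
  exact ⟨e, heI, he0, (hid e heI).1, fun x hx => by rw [(hid x hx).1, (hid x hx).2]⟩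

lemma h32 (hmax : IsMaximalSubring R) (hRI : ∀ x : S, x ∈ R → x ∈ I → x = 0) :
    P3 I → P2 I := by
  rintro ⟨e, heI, he0, hee, hcomm⟩
  let K : TwoSidedIdeal S := TwoSidedIdeal.mk' {x | x ∈ I ∧ e * x = 0}
    ⟨I.zero_mem, mul_zero e⟩
    (fun hx hy => ⟨I.add_mem hx.1 hy.1, by rw [mul_add, hx.2, hy.2, add_zero]⟩)
    (fun hx => ⟨I.neg_mem hx.1, by rw [mul_neg, hx.2, neg_zero]⟩)
    (fun {s x} hx => ⟨I.mul_mem_left s x hx.1, by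
      rw [hcomm _ (I.mul_mem_left s x hx.1), mul_assoc, ← hcomm x hx.1, hx.2, mul_zero]⟩)
    (fun {x s} hx => ⟨I.mul_mem_right x s hx.1, by rw [← mul_assoc, hx.2, zero_mul]⟩)
  have hmemK : ∀ x : S, x ∈ K ↔ x ∈ I ∧ e * x = 0 := fun x =>
    TwoSidedIdeal.mem_mk' _ _ _ _ _ _ x
  rcases dichotomy R I hmax hRI K (fun x hx => ((hmemK x).1 hx).1) with h | h
  · refine ⟨e, heI, fun x hx => ?_⟩
    have h1 : e * x - x = 0 := by
      refine h _ ((hmemK _).2 ⟨I.sub_mem (I.mul_mem_right e x heI) hx, ?_⟩)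
      rw [mul_sub, ← mul_assoc, hee, sub_self]
    have h2 : e * x = x := by rwa [sub_eq_zero] at h1
    exact ⟨h2, by rw [← hcomm x hx, h2]⟩
  · have hK := ((hmemK e).1 (h e heI)).2
    rw [hee] at hK
    exact absurd hK he0

lemma h24 (hI : I ≠ ⊥) : P2 I → P4 R I := by
  rintro ⟨e, heI, hid⟩
  obtain ⟨x₀, hx₀I, hx₀0⟩ := exists_ne_zero I hI
  have he0 : e ≠ 0 := fun h => hx₀0 (by rw [← (hid x₀ hx₀I).1, h, zero_mul])
  have hc := central_of_identity I heI hid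
  have hee : e * e = e := (hid e heI).1
  refine ⟨fun s => e * s, fun r _ => I.mul_mem_right e r heI,
    fun r _ r' _ => mul_add e r r', ?_, fun r _ x _ => (mul_assoc e x r).symm, ?_,
    ⟨1, R.one_mem, by show e * 1 ≠ 0; rw [mul_one]; exact he0⟩⟩
  · intro r _ x _
    show e * (r * x) = r * (e * x)
    rw [← mul_assoc, hc r, mul_assoc]
  · intro r _ x _
    show e * (r * x) = (e * r) * (e * x)
    calc e * (r * x) = (e * r) * x := (mul_assoc _ _ _).symm
      _ = (r * e) * x := by rw [hc r]
      _ = r * (e * x) := mul_assoc _ _ _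
      _ = r * ((e * e) * x) := by rw [hee]
      _ = (r * e) * (e * x) := by noncomm_ring
      _ = (e * r) * (e * x) := by rw [hc r]

lemma h42 (hmax : IsMaximalSubring R) (hRI : ∀ x : S, x ∈ R → x ∈ I → x = 0) :
    P4 R I → P2 I := by
  rintro ⟨g, hgI, _, hgl, hgr, hgm, r₀, hr₀, hg₀⟩
  apply h32 hmax hRI
  set e := g 1 with he_def
  have heI : e ∈ I := hgI 1 R.one_mem
  have hre : ∀ r ∈ R, g r = r * e := by
    intro r hr
    have h := hgl r hr 1 R.one_mem
    rwa [mul_one] at h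
  have her : ∀ r ∈ R, g r = e * r := by
    intro r hr
    have h := hgr r hr 1 R.one_mem
    rwa [one_mul] at h
  have hee : e * e = e := by
    have h := hgm 1 R.one_mem 1 R.one_mem
    rw [one_mul] at h
    exact h.symm
  have he0 : e ≠ 0 := by
    intro h
    apply hg₀
    rw [hre r₀ hr₀, h, mul_zero]
  have hcomm : ∀ r ∈ R, e * r = r * e := fun r hr => by rw [← her r hr, ← hre r hr]
  have heR : e ∉ R := fun h => he0 (hRI e h heI)
  have hle : R ≤ Subring.centralizer {e} := by
    intro r hr
    rw [Subring.mem_centralizer_iff]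
    intro y hy
    rw [Set.mem_singleton_iff] at hy
    subst hy
    exact hcomm r hr
  rcases hmax.2 _ hle with h | h
  · rw [← h] at heR
    exact absurd (Subring.mem_centralizer_iff.2
      (fun y hy => by rw [Set.mem_singleton_iff] at hy; subst hy; rfl)) heR
  · refine ⟨e, heI, he0, hee, fun x _ => ?_⟩
    have hx : x ∈ Subring.centralizer {e} := by rw [h]; exact Subring.mem_top x
    exact Subring.mem_centralizer_iff.1 hx e rfl


lemma build_f (hmax : IsMaximalSubring R) (hI : I ≠ ⊥)
    (hRI : ∀ x : S, x ∈ R → x ∈ I → x = 0)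
    (Z : TwoSidedIdeal R)
    (hZ : ∀ x : R, x ∈ Z ↔ ∀ i ∈ I, (x : S) * i = 0 ∧ i * (x : S) = 0) :
    P2 I → P1 R I Z := by
  rintro ⟨e, heI, hid⟩
  obtain ⟨x₀, hx₀I, hx₀0⟩ := exists_ne_zero I hI
  have he0 : e ≠ 0 := fun h => hx₀0 (by rw [← (hid x₀ hx₀I).1, h, zero_mul])
  have hc := central_of_identity I heI hid
  have hre := eq_re R I hmax hRI heI he0 hid
  have hex : ∀ x : S, ∃ r : R, x ∈ I → x = (r : S) * e := by
    intro x
    by_cases hx : x ∈ I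
    · obtain ⟨r, hr, hxr⟩ := hre x hx
      exact ⟨⟨r, hr⟩, fun _ => hxr⟩
    · exact ⟨0, fun h => absurd h hx⟩
  choose rp hrp using hex
  have hq := qeq (I := I) Z hZ heI hid
  refine ⟨fun x => (rp x : Z.ringCon.Quotient), ?_, ?_, ?_, ?_, ?_, ?_⟩
  · intro i hi j hj
    show (rp (i + j) : Z.ringCon.Quotient) = ↑(rp i) + ↑(rp j)
    rw [← RingCon.coe_add, hq]
    have h1 : ((rp i + rp j : R) : S) = (rp i : S) + (rp j : S) := by norm_cast
    rw [h1, add_mul, ← hrp (i + j) (I.add_mem hi hj), ← hrp i hi, ← hrp j hj]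
  · intro r i hi
    show (rp ((r : S) * i) : Z.ringCon.Quotient) = ↑r * ↑(rp i)
    rw [← RingCon.coe_mul, hq]
    have h1 : ((r * rp i : R) : S) = (r : S) * (rp i : S) := by norm_cast
    rw [h1, mul_assoc, ← hrp i hi, ← hrp _ (I.mul_mem_left (r : S) i hi)]
  · intro r i hi
    show (rp (i * (r : S)) : Z.ringCon.Quotient) = ↑(rp i) * ↑r
    rw [← RingCon.coe_mul, hq]
    have h1 : ((rp i * r : R) : S) = (rp i : S) * (r : S) := by norm_cast
    rw [h1, mul_assoc, ← hc (r : S), ← mul_assoc, ← hrp i hi,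
      ← hrp _ (I.mul_mem_right i (r : S) hi)]
  · intro i hi j hj
    show (rp (i * j) : Z.ringCon.Quotient) = ↑(rp i) * ↑(rp j)
    rw [← RingCon.coe_mul, hq]
    have h1 : ((rp i * rp j : R) : S) = (rp i : S) * (rp j : S) := by norm_cast
    have h5 : (rp i : S) * ((rp j : S) * e) = i * j := by
      rw [← hrp j hj, ← (hid j hj).1, ← mul_assoc, ← hrp i hi, (hid j hj).1]
    rw [h1, mul_assoc, h5, ← hrp (i * j) (I.mul_mem_left i j hj)]
  · intro i hi j hj h
    show i = j
    have h' : (rp i : Z.ringCon.Quotient) = ↑(rp j) := h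
    rw [hq] at h'
    rw [hrp i hi, h']
    exact (hrp j hj).symm
  · intro q
    obtain ⟨a, ha⟩ := Quot.exists_rep q
    refine ⟨(a : S) * e, I.mul_mem_left (a : S) e heI, ?_⟩
    have h1 : (rp ((a : S) * e) : Z.ringCon.Quotient) = ↑a := by
      rw [hq]
      exact (hrp _ (I.mul_mem_left (a : S) e heI)).symm
    exact h1.trans ha

lemma h25 (hmax : IsMaximalSubring R) (hI : I ≠ ⊥)
    (hRI : ∀ x : S, x ∈ R → x ∈ I → x = 0)
    (Z : TwoSidedIdeal R)
    (hZ : ∀ x : R, x ∈ Z ↔ ∀ i ∈ I, (x : S) * i = 0 ∧ i * (x : S) = 0) :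
    P2 I → P5 R I Z := by
  intro hp2
  obtain ⟨e, heI, hid⟩ := hp2
  obtain ⟨x₀, hx₀I, hx₀0⟩ := exists_ne_zero I hI
  have he0 : e ≠ 0 := fun h => hx₀0 (by rw [← (hid x₀ hx₀I).1, h, zero_mul])
  have hc := central_of_identity I heI hid
  have hre := eq_re R I hmax hRI heI he0 hid
  have hee : e * e = e := (hid e heI).1
  have hkey : ∀ a b : S, (a * e) * (b * e) = (a * b) * e := fun a b => by
    rw [mul_assoc a e (b * e), hc (b * e), mul_assoc b e e, hee, ← mul_assoc]
  have hkey2 : ∀ a b : S, (a * e) * b = (a * b) * e := fun a b => by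
    rw [mul_assoc, hc b, ← mul_assoc]
  obtain ⟨f, hfadd, hfl, hfr, hfm, hfinj, hfsurj⟩ :=
    build_f hmax hI hRI Z hZ ⟨e, heI, hid⟩
  constructor
  · refine ⟨f, hfadd, hfl, hfr, hfm, ?_⟩
    obtain ⟨i, hi, hfi⟩ := hfsurj ((1 : R) : Z.ringCon.Quotient)
    refine ⟨i, hi, ?_⟩
    rw [hfi]
    have h0 : ((0 : R) : Z.ringCon.Quotient) = 0 := RingCon.coe_zero _
    rw [← h0]
    exact quot_nontrivial Z hZ heI hid he0
  constructor
  · -- Z ≠ ⊤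
    intro h
    have h1 : (1 : R) ∈ Z := by rw [h]; exact TwoSidedIdeal.mem_top _
    have h2 := ((hZ 1).1 h1 e heI).1
    rw [OneMemClass.coe_one, one_mul] at h2
    exact he0 h2
  · -- maximality of Z
    intro J hZJ
    let KJ : TwoSidedIdeal S := TwoSidedIdeal.mk'
      {x : S | ∃ j : R, j ∈ J ∧ x = (j : S) * e}
      ⟨0, J.zero_mem, by norm_num⟩
      (by
        rintro x y ⟨j, hj, rfl⟩ ⟨j', hj', rfl⟩
        exact ⟨j + j', J.add_mem hj hj', by push_cast; rw [add_mul]⟩)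
      (by
        rintro x ⟨j, hj, rfl⟩
        exact ⟨-j, J.neg_mem hj, by push_cast; rw [neg_mul]⟩)
      (by
        rintro s x ⟨j, hj, rfl⟩
        obtain ⟨r, hr, i, hiI, rfl⟩ := split R I hmax hI hRI s
        obtain ⟨r', hr', hir'⟩ := hre i hiI
        refine ⟨⟨r, hr⟩ * j + ⟨r', hr'⟩ * j,
          J.add_mem (J.mul_mem_left _ _ hj) (J.mul_mem_left _ _ hj), ?_⟩
        have hcoe : ((⟨r, hr⟩ * j + ⟨r', hr'⟩ * j : R) : S) = r * (j : S) + r' * (j : S) := by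
          push_cast; rfl
        rw [hir', add_mul, hkey, ← mul_assoc, hcoe, add_mul]
      )
      (by
        rintro x s ⟨j, hj, rfl⟩
        obtain ⟨r, hr, i, hiI, rfl⟩ := split R I hmax hI hRI s
        obtain ⟨r', hr', hir'⟩ := hre i hiI
        refine ⟨j * ⟨r, hr⟩ + j * ⟨r', hr'⟩,
          J.add_mem (J.mul_mem_right _ _ hj) (J.mul_mem_right _ _ hj), ?_⟩
        have hcoe : ((j * ⟨r, hr⟩ + j * ⟨r', hr'⟩ : R) : S) = (j : S) * r + (j : S) * r' := by
          push_cast; rfl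
        rw [hir', mul_add, hkey2, hkey, hcoe, add_mul]
      )
    have hmemKJ : ∀ x : S, x ∈ KJ ↔ ∃ j : R, j ∈ J ∧ x = (j : S) * e := fun x =>
      TwoSidedIdeal.mem_mk' _ _ _ _ _ _ x
    have hKJI : ∀ x ∈ KJ, x ∈ I := by
      intro x hx
      obtain ⟨j, hj, rfl⟩ := (hmemKJ x).1 hx
      exact I.mul_mem_left _ _ heI
    rcases dichotomy R I hmax hRI KJ hKJI with h | h
    · left
      refine le_antisymm (fun j hj => ?_) hZJ
      have h1 : (j : S) * e = 0 := h _ ((hmemKJ _).2 ⟨j, hj, rfl⟩)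
      exact mem_ann Z hZ heI hid j h1
    · right
      obtain ⟨j₀, hj₀, hej₀⟩ := (hmemKJ e).1 (h e heI)
      have hsub : (1 - j₀ : R) ∈ Z := by
        apply mem_ann Z hZ heI hid
        push_cast
        rw [sub_mul, one_mul, ← hej₀, sub_self]
      have h1 : (1 : R) ∈ J := by
        have := J.add_mem (hZJ hsub) hj₀
        simpa using this
      exact J.eq_top h1

lemma h52 (hmax : IsMaximalSubring R) (hI : I ≠ ⊥)
    (hRI : ∀ x : S, x ∈ R → x ∈ I → x = 0)
    (Z : TwoSidedIdeal R)
    (hZ : ∀ x : R, x ∈ Z ↔ ∀ i ∈ I, (x : S) * i = 0 ∧ i * (x : S) = 0) :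
    P5 R I Z → P2 I := by
  rintro ⟨⟨f, hfadd, hfl, hfr, hfm, i₀, hi₀I, hf₀⟩, _, hJmax⟩
  have hsplit := split R I hmax hI hRI
  have hf00 : f 0 = 0 := by
    have h := hfadd 0 I.zero_mem 0 I.zero_mem
    rw [add_zero] at h
    exact (left_eq_add.mp h)
  have hfneg : ∀ x ∈ I, f (-x) = -f x := by
    intro x hx
    have h := hfadd x hx (-x) (I.neg_mem hx)
    rw [add_neg_cancel, hf00] at h
    exact (neg_eq_of_add_eq_zero_right h.symm).symm
  have hfsub : ∀ x ∈ I, ∀ y ∈ I, f (x - y) = f x - f y := by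
    intro x hx y hy
    rw [sub_eq_add_neg, hfadd x hx (-y) (I.neg_mem hy), hfneg y hy, sub_eq_add_neg]
  -- kernel ideal
  let N : TwoSidedIdeal S := TwoSidedIdeal.mk' {x | x ∈ I ∧ f x = 0}
    ⟨I.zero_mem, hf00⟩
    (fun hx hy => ⟨I.add_mem hx.1 hy.1, by rw [hfadd _ hx.1 _ hy.1, hx.2, hy.2, add_zero]⟩)
    (fun hx => ⟨I.neg_mem hx.1, by rw [hfneg _ hx.1, hx.2, neg_zero]⟩)
    (by
      rintro s x ⟨hxI, hfx⟩
      refine ⟨I.mul_mem_left s x hxI, ?_⟩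
      obtain ⟨r, hr, i, hiI, rfl⟩ := hsplit s
      rw [add_mul, hfadd _ (I.mul_mem_left r x hxI) _ (I.mul_mem_left i x hxI)]
      have h1 : f (r * x) = (⟨r, hr⟩ : R) * f x := hfl ⟨r, hr⟩ x hxI
      rw [h1, hfm i hiI x hxI, hfx, mul_zero, mul_zero, add_zero])
    (by
      rintro x s ⟨hxI, hfx⟩
      refine ⟨I.mul_mem_right x s hxI, ?_⟩
      obtain ⟨r, hr, i, hiI, rfl⟩ := hsplit s
      rw [mul_add, hfadd _ (I.mul_mem_right x r hxI) _ (I.mul_mem_right x i hxI)]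
      have h1 : f (x * r) = f x * (⟨r, hr⟩ : R) := hfr ⟨r, hr⟩ x hxI
      rw [h1, hfm x hxI i hiI, hfx, zero_mul, zero_mul, add_zero])
  have hmemN : ∀ x : S, x ∈ N ↔ x ∈ I ∧ f x = 0 := fun x =>
    TwoSidedIdeal.mem_mk' _ _ _ _ _ _ x
  have hN0 : ∀ x ∈ I, f x = 0 → x = 0 := by
    rcases dichotomy R I hmax hRI N (fun x hx => ((hmemN x).1 hx).1) with h | h
    · exact fun x hx hfx => h x ((hmemN x).2 ⟨hx, hfx⟩)
    · exact absurd ((hmemN i₀).1 (h i₀ hi₀I)).2 hf₀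
  have hinj : ∀ x ∈ I, ∀ y ∈ I, f x = f y → x = y := by
    intro x hx y hy hfxy
    have h1 : f (x - y) = 0 := by rw [hfsub x hx y hy, hfxy, sub_self]
    have h2 : x - y = 0 := hN0 _ (I.sub_mem hx hy) h1
    rwa [sub_eq_zero] at h2
  -- the image ideal in R
  let J : TwoSidedIdeal R := TwoSidedIdeal.mk' {r : R | ∃ i ∈ I, f i = (r : Z.ringCon.Quotient)}
    ⟨0, I.zero_mem, by rw [hf00, RingCon.coe_zero]⟩
    (by
      rintro a b ⟨i, hi, hfi⟩ ⟨i', hi', hfi'⟩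
      exact ⟨i + i', I.add_mem hi hi',
        by rw [hfadd i hi i' hi', hfi, hfi', RingCon.coe_add]⟩)
    (by
      rintro a ⟨i, hi, hfi⟩
      exact ⟨-i, I.neg_mem hi, by rw [hfneg i hi, hfi, RingCon.coe_neg]⟩)
    (by
      rintro x a ⟨i, hi, hfi⟩
      exact ⟨(x : S) * i, I.mul_mem_left _ _ hi,
        by rw [hfl x i hi, hfi, RingCon.coe_mul]⟩)
    (by
      rintro a x ⟨i, hi, hfi⟩
      exact ⟨i * (x : S), I.mul_mem_right _ _ hi,
        by rw [hfr x i hi, hfi, RingCon.coe_mul]⟩)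
  have hmemJ : ∀ a : R, a ∈ J ↔ ∃ i ∈ I, f i = (a : Z.ringCon.Quotient) := fun a =>
    TwoSidedIdeal.mem_mk' _ _ _ _ _ _ a
  have hZJ : Z ≤ J := by
    intro z hz
    refine (hmemJ z).2 ⟨0, I.zero_mem, ?_⟩
    have h1 : (z : Z.ringCon.Quotient) = ((0 : R) : Z.ringCon.Quotient) := by
      rw [RingCon.eq, TwoSidedIdeal.rel_iff, sub_zero]
      exact hz
    rw [hf00, h1, RingCon.coe_zero]
  have hJZ : J ≠ Z := by
    intro h
    obtain ⟨a, ha⟩ := Quot.exists_rep (f i₀)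
    have haJ : a ∈ J := (hmemJ a).2 ⟨i₀, hi₀I, ha.symm⟩
    rw [h] at haJ
    apply hf₀
    have h1 : (a : Z.ringCon.Quotient) = ((0 : R) : Z.ringCon.Quotient) := by
      rw [RingCon.eq, TwoSidedIdeal.rel_iff, sub_zero]
      exact haJ
    calc f i₀ = (a : Z.ringCon.Quotient) := ha.symm
      _ = ((0 : R) : Z.ringCon.Quotient) := h1
      _ = 0 := RingCon.coe_zero _
  have hJtop : J = ⊤ := (hJmax J hZJ).resolve_left hJZ
  have h1J : (1 : R) ∈ J := by rw [hJtop]; exact TwoSidedIdeal.mem_top _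
  obtain ⟨e, heI, hfe⟩ := (hmemJ 1).1 h1J
  rw [RingCon.coe_one] at hfe
  refine ⟨e, heI, fun x hx => ⟨?_, ?_⟩⟩
  · apply hinj _ (I.mul_mem_right e x heI) x hx
    rw [hfm e heI x hx, hfe, one_mul]
  · apply hinj _ (I.mul_mem_left x e heI) x hx
    rw [hfm x hx e heI, hfe, mul_one]

lemma h26 (hmax : IsMaximalSubring R) (hI : I ≠ ⊥)
    (hRI : ∀ x : S, x ∈ R → x ∈ I → x = 0) : P2 I → P6 R I := by
  rintro ⟨e, heI, hid⟩
  obtain ⟨x₀, hx₀I, hx₀0⟩ := exists_ne_zero I hI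
  have he0 : e ≠ 0 := fun h => hx₀0 (by rw [← (hid x₀ hx₀I).1, h, zero_mul])
  have hc := central_of_identity I heI hid
  have hre := eq_re R I hmax hRI heI he0 hid
  constructor
  · show AddSubgroup.closure _ = ⊤
    rw [AddSubgroup.eq_top_iff']
    intro s
    obtain ⟨r, hr, i, hiI, rfl⟩ := split R I hmax hI hRI s
    obtain ⟨r', hr', rfl⟩ := hre i hiI
    exact AddSubgroup.add_mem _
      (AddSubgroup.subset_closure
        ⟨r, hr, 1, fun x _ => by rw [one_mul, mul_one], (mul_one r).symm⟩)
      (AddSubgroup.subset_closure ⟨r', hr', e, fun x _ => hc x, rfl⟩)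
  · exact ⟨e, heI, e, heI, by rw [(hid e heI).1]; exact he0⟩

lemma h62 (hmax : IsMaximalSubring R) (hI : I ≠ ⊥)
    (hRI : ∀ x : S, x ∈ R → x ∈ I → x = 0) : P6 R I → P2 I := by
  rintro ⟨hce, x₀, hx₀, y₀, hy₀, hxy₀⟩
  have hsplit := split R I hmax hI hRI
  -- Step 1: find an element commuting with R that is not in R
  have hc0 : ∃ c : S, (∀ x ∈ R, c * x = x * c) ∧ c ∉ R := by
    by_contra h
    push_neg at h
    have hsub : {s : S | ∃ r ∈ R, ∃ c : S, (∀ x ∈ R, c * x = x * c) ∧ s = r * c}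
        ⊆ (R.toAddSubgroup : Set S) := by
      rintro s ⟨r, hr, c, hcs, rfl⟩
      exact R.mul_mem hr (h c hcs)
    have hle := (AddSubgroup.closure_le R.toAddSubgroup).2 hsub
    apply hmax.1
    rw [Subring.eq_top_iff']
    intro x
    have hx : x ∈ AddSubgroup.closure
        {s : S | ∃ r ∈ R, ∃ c : S, (∀ x ∈ R, c * x = x * c) ∧ s = r * c} := by
      rw [hce]; trivial
    exact hle hx
  obtain ⟨c₀, hc₀comm, hc₀R⟩ := hc0
  obtain ⟨r, hr, i, hiI, hc₀eq⟩ := hsplit c₀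
  have hi0 : i ≠ 0 := by
    intro h
    apply hc₀R
    rw [hc₀eq, h, add_zero]
    exact hr
  -- Step 2: `i` commutes with R
  have hicomm : ∀ x ∈ R, i * x = x * i := by
    intro x hx
    have h' : (r + i) * x = x * (r + i) := by rw [← hc₀eq]; exact hc₀comm x hx
    have h'' : i * x - x * i = x * r - r * x := by
      rw [sub_eq_sub_iff_add_eq_add]
      rw [add_mul, mul_add] at h'
      rw [add_comm (i * x) (r * x)]
      exact h'
    have hmem : x * r - r * x ∈ I := by
      rw [← h'']
      exact I.sub_mem (I.mul_mem_right i x hiI) (I.mul_mem_left x i hiI)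
    have h0 : x * r - r * x = 0 := hRI _ (R.sub_mem (R.mul_mem hx hr) (R.mul_mem hr hx)) hmem
    have h1 : i * x - x * i = 0 := by rw [h'', h0]
    exact sub_eq_zero.mp h1
  have hiR : i ∉ R := fun h => hi0 (hRI i h hiI)
  -- Step 3: `i` is central in S
  have hicent : ∀ s : S, i * s = s * i := by
    have hle : R ≤ Subring.closure ((R : Set S) ∪ {i}) :=
      fun x hx => Subring.subset_closure (Or.inl hx)
    have hiT : i ∈ Subring.closure ((R : Set S) ∪ {i}) :=
      Subring.subset_closure (Or.inr rfl)
    rcases hmax.2 _ hle with h | h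
    · rw [h] at hiT
      exact absurd hiT hiR
    · have hTc : Subring.closure ((R : Set S) ∪ {i}) ≤ Subring.centralizer {i} := by
        rw [Subring.closure_le]
        rintro x (hx | hx)
        · rw [SetLike.mem_coe, Subring.mem_centralizer_iff]
          intro g hg
          rw [Set.mem_singleton_iff] at hg
          subst hg
          exact hicomm x hx
        · rw [Set.mem_singleton_iff] at hx
          subst hx
          rw [SetLike.mem_coe, Subring.mem_centralizer_iff]
          intro g hg
          rw [Set.mem_singleton_iff] at hg
          subst hg
          rfl
      intro s
      have hs : s ∈ Subring.centralizer {i} := hTc (by rw [h]; exact Subring.mem_top s)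
      exact Subring.mem_centralizer_iff.1 hs i rfl
  -- Step 4: left annihilator of I in I is zero
  let L : TwoSidedIdeal S := TwoSidedIdeal.mk' {x | x ∈ I ∧ ∀ y ∈ I, x * y = 0}
    ⟨I.zero_mem, fun y _ => zero_mul y⟩
    (fun hx hy => ⟨I.add_mem hx.1 hy.1,
      fun y hy' => by rw [add_mul, hx.2 y hy', hy.2 y hy', add_zero]⟩)
    (fun hx => ⟨I.neg_mem hx.1, fun y hy => by rw [neg_mul, hx.2 y hy, neg_zero]⟩)
    (fun {s x} hx => ⟨I.mul_mem_left s x hx.1,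
      fun y hy => by rw [mul_assoc, hx.2 y hy, mul_zero]⟩)
    (fun {x s} hx => ⟨I.mul_mem_right x s hx.1,
      fun y hy => by rw [mul_assoc, hx.2 (s * y) (I.mul_mem_left s y hy)]⟩)
  have hmemL : ∀ x : S, x ∈ L ↔ x ∈ I ∧ ∀ y ∈ I, x * y = 0 := fun x =>
    TwoSidedIdeal.mem_mk' _ _ _ _ _ _ x
  have hL0 : ∀ x ∈ I, (∀ y ∈ I, x * y = 0) → x = 0 := by
    rcases dichotomy R I hmax hRI L (fun x hx => ((hmemL x).1 hx).1) with h | h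
    · exact fun x hx hann => h x ((hmemL x).2 ⟨hx, hann⟩)
    · exact absurd (((hmemL x₀).1 (h x₀ hx₀)).2 y₀ hy₀) hxy₀
  -- Step 5: `i` is regular on I
  let Kc : TwoSidedIdeal S := TwoSidedIdeal.mk' {x | x ∈ I ∧ i * x = 0}
    ⟨I.zero_mem, mul_zero i⟩
    (fun hx hy => ⟨I.add_mem hx.1 hy.1, by rw [mul_add, hx.2, hy.2, add_zero]⟩)
    (fun hx => ⟨I.neg_mem hx.1, by rw [mul_neg, hx.2, neg_zero]⟩)
    (fun {s x} hx => ⟨I.mul_mem_left s x hx.1,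
      by rw [← mul_assoc, hicent s, mul_assoc, hx.2, mul_zero]⟩)
    (fun {x s} hx => ⟨I.mul_mem_right x s hx.1,
      by rw [← mul_assoc, hx.2, zero_mul]⟩)
  have hmemKc : ∀ x : S, x ∈ Kc ↔ x ∈ I ∧ i * x = 0 := fun x =>
    TwoSidedIdeal.mem_mk' _ _ _ _ _ _ x
  have hKc0 : ∀ x ∈ I, i * x = 0 → x = 0 := by
    rcases dichotomy R I hmax hRI Kc (fun x hx => ((hmemKc x).1 hx).1) with h | h
    · exact fun x hx h0 => h x ((hmemKc x).2 ⟨hx, h0⟩)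
    · exfalso
      apply hi0
      apply hL0 i hiI
      intro y hy
      exact ((hmemKc y).1 (h y hy)).2
  have hii0 : i * i ≠ 0 := fun h => hi0 (hKc0 i hiI h)
  -- Step 6: I = (i*i)·S
  have hcomm2 : ∀ t : S, t * (i * i) = (i * i) * t := fun t => by
    rw [← mul_assoc, ← hicent t, mul_assoc, ← hicent t, ← mul_assoc]
  let P : TwoSidedIdeal S := TwoSidedIdeal.mk' {x | ∃ s : S, x = i * i * s}
    ⟨0, (mul_zero _).symm⟩
    (fun {x y} hx hy => by
      obtain ⟨s, rfl⟩ := hx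
      obtain ⟨s', rfl⟩ := hy
      exact ⟨s + s', by rw [mul_add]⟩)
    (fun {x} hx => by
      obtain ⟨s, rfl⟩ := hx
      exact ⟨-s, by rw [mul_neg]⟩)
    (fun {t x} hx => by
      obtain ⟨s, rfl⟩ := hx
      exact ⟨t * s, by rw [← mul_assoc, hcomm2 t, mul_assoc]⟩)
    (fun {x t} hx => by
      obtain ⟨s, rfl⟩ := hx
      exact ⟨s * t, by rw [mul_assoc]⟩)
  have hmemP : ∀ x : S, x ∈ P ↔ ∃ s : S, x = i * i * s := fun x =>
    TwoSidedIdeal.mem_mk' _ _ _ _ _ _ x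
  have hPI : ∀ x ∈ P, x ∈ I := by
    intro x hx
    obtain ⟨s, rfl⟩ := (hmemP x).1 hx
    exact I.mul_mem_right _ s (I.mul_mem_right i i hiI)
  obtain ⟨t, hit⟩ : ∃ t : S, i = i * i * t := by
    rcases dichotomy R I hmax hRI P hPI with h | h
    · exfalso
      apply hii0
      exact h (i * i) ((hmemP _).2 ⟨1, (mul_one _).symm⟩)
    · exact (hmemP i).1 (h i hiI)
  -- the identity element of I
  refine ⟨i * t, I.mul_mem_right i t hiI, fun x hx => ⟨?_, ?_⟩⟩
  · have h1 : i * ((i * t) * x - x) = 0 := by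
      rw [mul_sub, ← mul_assoc, ← mul_assoc, ← hit, sub_self]
    have h2 := hKc0 _ (I.sub_mem (I.mul_mem_right _ x (I.mul_mem_right i t hiI)) hx) h1
    rwa [sub_eq_zero] at h2
  · have h1 : i * (x * (i * t) - x) = 0 := by
      rw [mul_sub, ← mul_assoc, hicent x, mul_assoc x i (i * t), ← mul_assoc i i t, ← hit,
        ← hicent x, sub_self]
    have h2 := hKc0 _ (I.sub_mem (I.mul_mem_left x _ (I.mul_mem_right i t hiI)) hx) h1
    rwa [sub_eq_zero] at h2


end Stmt15Aux

/-- Let `R` be a maximal subring of `S` and `I` a nonzero two-sided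
ideal of `S` with `R ∩ I = {0}`, and let `Z = ann_R(I)` (a two-sided ideal of `R`).
TFAE: (1) there is an `R`-isomorphism `I ≅ R/ann_R(I)`; (2) `I` has a multiplicative
identity; (3) `I` contains a nonzero idempotent commuting with all of `I`; (4) there is
a nonzero `R`-homomorphism `R → I`; (5) there is a nonzero `R`-homomorphism
`I → R/ann_R(I)` and `ann_R(I)` is a maximal two-sided ideal of `R`; (6) `S` is a
central extension of `R` and `I·I ≠ 0`. -/
theorem stmt15 {S : Type*} [Ring S] (R : Subring S) (hmax : IsMaximalSubring R)
    (I : TwoSidedIdeal S) (hI : I ≠ ⊥)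
    (hRI : ∀ x : S, x ∈ R → x ∈ I → x = 0)
    (Z : TwoSidedIdeal R)
    (hZ : ∀ x : R, x ∈ Z ↔ ∀ i ∈ I, (x : S) * i = 0 ∧ i * (x : S) = 0) :
    -- (1): an `R`-isomorphism `I → R/ann_R(I)`
    ((∃ f : S → Z.ringCon.Quotient,
        (∀ i ∈ I, ∀ j ∈ I, f (i + j) = f i + f j) ∧
        (∀ r : R, ∀ i ∈ I, f ((r : S) * i) = (r : Z.ringCon.Quotient) * f i) ∧
        (∀ r : R, ∀ i ∈ I, f (i * (r : S)) = f i * (r : Z.ringCon.Quotient)) ∧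
        (∀ i ∈ I, ∀ j ∈ I, f (i * j) = f i * f j) ∧
        (∀ i ∈ I, ∀ j ∈ I, f i = f j → i = j) ∧
        (∀ q : Z.ringCon.Quotient, ∃ i ∈ I, f i = q)) ↔
      -- (2): `I` has a multiplicative identity element
      (∃ e ∈ I, ∀ x ∈ I, e * x = x ∧ x * e = x)) ∧
    ((∃ e ∈ I, ∀ x ∈ I, e * x = x ∧ x * e = x) ↔
      -- (3): a nonzero idempotent of `I` commuting with all of `I`
      (∃ e ∈ I, e ≠ 0 ∧ e * e = e ∧ ∀ x ∈ I, e * x = x * e)) ∧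
    ((∃ e ∈ I, e ≠ 0 ∧ e * e = e ∧ ∀ x ∈ I, e * x = x * e) ↔
      -- (4): a nonzero `R`-homomorphism `R → I`
      (∃ g : S → S,
        (∀ r ∈ R, g r ∈ I) ∧
        (∀ r ∈ R, ∀ r' ∈ R, g (r + r') = g r + g r') ∧
        (∀ r ∈ R, ∀ x ∈ R, g (r * x) = r * g x) ∧
        (∀ r ∈ R, ∀ x ∈ R, g (x * r) = g x * r) ∧
        (∀ r ∈ R, ∀ x ∈ R, g (r * x) = g r * g x) ∧
        (∃ r ∈ R, g r ≠ 0))) ∧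
    ((∃ g : S → S,
        (∀ r ∈ R, g r ∈ I) ∧
        (∀ r ∈ R, ∀ r' ∈ R, g (r + r') = g r + g r') ∧
        (∀ r ∈ R, ∀ x ∈ R, g (r * x) = r * g x) ∧
        (∀ r ∈ R, ∀ x ∈ R, g (x * r) = g x * r) ∧
        (∀ r ∈ R, ∀ x ∈ R, g (r * x) = g r * g x) ∧
        (∃ r ∈ R, g r ≠ 0)) ↔
      -- (5): a nonzero `R`-homomorphism `I → R/ann_R(I)` and `ann_R(I)` maximal
      ((∃ f : S → Z.ringCon.Quotient,
          (∀ i ∈ I, ∀ j ∈ I, f (i + j) = f i + f j) ∧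
          (∀ r : R, ∀ i ∈ I, f ((r : S) * i) = (r : Z.ringCon.Quotient) * f i) ∧
          (∀ r : R, ∀ i ∈ I, f (i * (r : S)) = f i * (r : Z.ringCon.Quotient)) ∧
          (∀ i ∈ I, ∀ j ∈ I, f (i * j) = f i * f j) ∧
          (∃ i ∈ I, f i ≠ 0)) ∧
        (Z ≠ ⊤ ∧ ∀ J : TwoSidedIdeal R, Z ≤ J → J = Z ∨ J = ⊤))) ∧
    (((∃ f : S → Z.ringCon.Quotient,
          (∀ i ∈ I, ∀ j ∈ I, f (i + j) = f i + f j) ∧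
          (∀ r : R, ∀ i ∈ I, f ((r : S) * i) = (r : Z.ringCon.Quotient) * f i) ∧
          (∀ r : R, ∀ i ∈ I, f (i * (r : S)) = f i * (r : Z.ringCon.Quotient)) ∧
          (∀ i ∈ I, ∀ j ∈ I, f (i * j) = f i * f j) ∧
          (∃ i ∈ I, f i ≠ 0)) ∧
        (Z ≠ ⊤ ∧ ∀ J : TwoSidedIdeal R, Z ≤ J → J = Z ∨ J = ⊤)) ↔
      -- (6): `S` is a central extension of `R` and `I·I ≠ 0`
      (IsCentralExtension R ∧ ∃ x ∈ I, ∃ y ∈ I, x * y ≠ 0)) := by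
  refine ⟨⟨Stmt15Aux.h12 Z, Stmt15Aux.build_f hmax hI hRI Z hZ⟩,
    ⟨Stmt15Aux.h23 hI, Stmt15Aux.h32 hmax hRI⟩,
    ⟨fun h3 => Stmt15Aux.h24 hI (Stmt15Aux.h32 hmax hRI h3),
     fun h4 => Stmt15Aux.h23 hI (Stmt15Aux.h42 hmax hRI h4)⟩,
    ⟨fun h4 => Stmt15Aux.h25 hmax hI hRI Z hZ (Stmt15Aux.h42 hmax hRI h4),
     fun h5 => Stmt15Aux.h24 hI (Stmt15Aux.h52 hmax hI hRI Z hZ h5)⟩,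
    ⟨fun h5 => Stmt15Aux.h26 hmax hI hRI (Stmt15Aux.h52 hmax hI hRI Z hZ h5),
     fun h6 => Stmt15Aux.h25 hmax hI hRI Z hZ (Stmt15Aux.h62 hmax hI hRI h6)⟩⟩
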